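/- For any complex n×n matrix X there exist a diagonal matrix S with all diagonal entries of modulus 1, a unit lower triangular matrix L, and an upper triangular matrix U with all diagonal entries nonzero, such that X + S = L U. -/

import Mathlib

open Matrix

/-- Block matrix helper: top-left scalar, first row, first column, rest. -/
def blk {n : ℕ} (a : ℂ) (r c : Fin n → ℂ) (B : Matrix (Fin n) (Fin n) ℂ) :
    Matrix (Fin (n + 1)) (Fin (n + 1)) ℂ :=
  Matrix.of (Fin.cons (Fin.cons a r) (fun i' => Fin.cons (c i') (B i')))

@[simp] lemma blk_00 {n : ℕ} (a : ℂ) (r c : Fin n → ℂ) (B : Matrix (Fin n) (Fin n) ℂ) :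
    blk a r c B 0 0 = a := rfl

@[simp] lemma blk_0s {n : ℕ} (a : ℂ) (r c : Fin n → ℂ) (B : Matrix (Fin n) (Fin n) ℂ)
    (j : Fin n) : blk a r c B 0 j.succ = r j := by
  simp [blk]

@[simp] lemma blk_s0 {n : ℕ} (a : ℂ) (r c : Fin n → ℂ) (B : Matrix (Fin n) (Fin n) ℂ)
    (i : Fin n) : blk a r c B i.succ 0 = c i := by
  simp [blk]

@[simp] lemma blk_ss {n : ℕ} (a : ℂ) (r c : Fin n → ℂ) (B : Matrix (Fin n) (Fin n) ℂ)
    (i j : Fin n) : blk a r c B i.succ j.succ = B i j := by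
  simp [blk]

theorem stmt7 (n : ℕ) (X : Matrix (Fin n) (Fin n) ℂ) :
    ∃ S L U : Matrix (Fin n) (Fin n) ℂ,
      S.IsDiag ∧ (∀ i, ‖S i i‖ = 1) ∧
      (∀ i j : Fin n, (i : ℕ) < (j : ℕ) → L i j = 0) ∧ (∀ i, L i i = 1) ∧
      (∀ i j : Fin n, (j : ℕ) < (i : ℕ) → U i j = 0) ∧ (∀ i, U i i ≠ 0) ∧
      X + S = L * U := by
  induction n with
  | zero =>
      refine ⟨0, 1, 1, ?_, ?_, ?_, ?_, ?_, ?_, ?_⟩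
      · intro i; exact i.elim0
      · intro i; exact i.elim0
      · intro i; exact i.elim0
      · intro i; exact i.elim0
      · intro i; exact i.elim0
      · intro i; exact i.elim0
      · ext i j; exact i.elim0
  | succ n ih =>
      set x := X 0 0 with hx
      set s0 : ℂ := if x = 0 then 1 else x / (‖x‖ : ℝ) with hs0
      set a : ℂ := x + s0 with ha
      have habs : ‖s0‖ = 1 := by
        by_cases h : x = 0
        · simp [hs0, h]
        · have : ‖x‖ ≠ 0 := by simpa using h
          simp [hs0, h, map_div₀, Complex.norm_real,
            abs_of_nonneg (norm_nonneg x), div_self this]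
      have hane : a ≠ 0 := by
        by_cases h : x = 0
        · simp [ha, hs0, h]
        · have hr : (‖x‖ : ℂ) ≠ 0 := by
            simpa using h
          have key : a = (x / (‖x‖ : ℂ)) * ((‖x‖ : ℂ) + 1) := by
            rw [ha, hs0, if_neg h, mul_add, div_mul_cancel₀ x hr, mul_one]
          rw [key]
          refine mul_ne_zero (div_ne_zero h hr) ?_
          have : ((‖x‖ : ℂ) + 1) = ((‖x‖ + 1 : ℝ) : ℂ) := by
            push_cast; ring
          rw [this, Complex.ofReal_ne_zero]
          positivity
      set Y : Matrix (Fin n) (Fin n) ℂ :=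
        Matrix.of (fun i j => X i.succ j.succ - X i.succ 0 * X 0 j.succ / a) with hY
      obtain ⟨S', L', U', hSd, hSa, hLl, hLd, hUu, hUd, hfac⟩ := ih Y
      refine ⟨blk s0 0 0 S', blk 1 0 (fun i => X i.succ 0 / a) L',
        blk a (fun j => X 0 j.succ) 0 U', ?_, ?_, ?_, ?_, ?_, ?_, ?_⟩
      · intro i j hij
        rcases Fin.eq_zero_or_eq_succ i with rfl | ⟨i', rfl⟩ <;>
          rcases Fin.eq_zero_or_eq_succ j with rfl | ⟨j', rfl⟩
        · exact absurd rfl hij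
        · simp
        · simp
        · simpa using hSd (by simpa using fun h => hij (by rw [h]) : i' ≠ j')
      · intro i
        rcases Fin.eq_zero_or_eq_succ i with rfl | ⟨i', rfl⟩
        · simpa using habs
        · simpa using hSa i'
      · intro i j hij
        rcases Fin.eq_zero_or_eq_succ i with rfl | ⟨i', rfl⟩ <;>
          rcases Fin.eq_zero_or_eq_succ j with rfl | ⟨j', rfl⟩
        · simp at hij
        · simp
        · simp at hij
        · exact blk_ss _ _ _ _ _ _ ▸ hLl i' j' (by simpa using hij)
      · intro i
        rcases Fin.eq_zero_or_eq_succ i with rfl | ⟨i', rfl⟩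
        · simp
        · simpa using hLd i'
      · intro i j hij
        rcases Fin.eq_zero_or_eq_succ i with rfl | ⟨i', rfl⟩ <;>
          rcases Fin.eq_zero_or_eq_succ j with rfl | ⟨j', rfl⟩
        · simp at hij
        · simp at hij
        · simp
        · exact blk_ss _ _ _ _ _ _ ▸ hUu i' j' (by simpa using hij)
      · intro i
        rcases Fin.eq_zero_or_eq_succ i with rfl | ⟨i', rfl⟩
        · simpa using hane
        · simpa using hUd i'
      · ext i j
        have hsum : ∀ i' j' : Fin n,
            ∑ k, L' i' k * U' k j' = Y i' j' + S' i' j' := by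
          intro i' j'
          have := congrFun (congrFun hfac i') j'
          simpa [Matrix.mul_apply, Matrix.add_apply] using this.symm
        rcases Fin.eq_zero_or_eq_succ i with rfl | ⟨i', rfl⟩ <;>
          rcases Fin.eq_zero_or_eq_succ j with rfl | ⟨j', rfl⟩
        · simp [Matrix.mul_apply, Fin.sum_univ_succ, ha, hx]
        · simp [Matrix.mul_apply, Fin.sum_univ_succ]
        · simp [Matrix.mul_apply, Fin.sum_univ_succ, div_mul_cancel₀ _ hane]
        · have hYe : Y i' j' = X i'.succ j'.succ - X i'.succ 0 * X 0 j'.succ / a := rfl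
          simp only [Matrix.add_apply, Matrix.mul_apply, Fin.sum_univ_succ, blk_ss,
            blk_0s, blk_s0, hsum, hYe]
          field_simp
          ring
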